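/- For every integer a ≥ 3, the genus of S(a) equals Σ_{i=1}^{⌊(a+1)/2⌋} i·C(a+1−i, i) − Σ_{i=0}^{⌊(a−3)/2⌋} (i+2)·C(a−3−i, i), where C(n, m) denotes the binomial coefficient. -/

import Mathlib

/-- The Lucas sequence: l 0 = 2, l 1 = 1, l (n+2) = l (n+1) + l n. -/
def lucas : ℕ → ℕ
  | 0 => 2
  | 1 => 1
  | n + 2 => lucas (n + 1) + lucas n

/-- The modified (monotone) Lucas sequence: l̃ 0 = 1, l̃ 1 = 2, l̃ n = l n for n ≥ 2. -/
def ltil : ℕ → ℕ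
  | 0 => 1
  | 1 => 2
  | n + 2 => lucas (n + 2)

/-- β x : minimal number of summands in a representation of x as a sum of
modified Lucas numbers (with repetitions allowed). -/
noncomputable def beta (x : ℕ) : ℕ :=
  sInf {s : ℕ | ∃ k : ℕ, ∃ b : ℕ → ℕ,
    x = ∑ i ∈ Finset.range (k + 1), b i * ltil i ∧ s = ∑ i ∈ Finset.range (k + 1), b i}

/-- γ x : the greatest k with l̃ k ≤ x (for x ≥ 1). -/
noncomputable def gamma (x : ℕ) : ℕ := sSup {k : ℕ | ltil k ≤ x}

/-- S a : the additive submonoid of ℕ generated by {l_a} ∪ {l_a + l_n : n ∈ ℕ}. -/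
def Sset (a : ℕ) : AddSubmonoid ℕ :=
  AddSubmonoid.closure ({lucas a} ∪ {x : ℕ | ∃ n : ℕ, x = lucas a + lucas n})

/-- T a : the additive submonoid of ℕ generated by {l_a + l_n : n ∈ ℕ}. -/
def Tset (a : ℕ) : AddSubmonoid ℕ :=
  AddSubmonoid.closure {x : ℕ | ∃ n : ℕ, x = lucas a + lucas n}

def glarge (y : ℕ) : ℕ := Nat.findGreatest (fun k => ltil k ≤ y) y
def grAux : ℕ → ℕ → ℕ
  | 0, _ => 0
  | f+1, y => if y = 0 then 0 else 1 + grAux f (y - ltil (glarge y))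
def gr (y : ℕ) : ℕ := grAux y y

lemma lucas_add_two (n : ℕ) : lucas (n+2) = lucas (n+1) + lucas n := rfl
lemma ltil_eq_lucas (n : ℕ) (h : 2 ≤ n) : ltil n = lucas n := by
  obtain ⟨m, rfl⟩ := Nat.exists_eq_add_of_le h; rw [Nat.add_comm]; rfl
lemma lucas_pos (n : ℕ) : 0 < lucas n := by
  induction n using Nat.strong_induction_on with
  | _ n ih => match n with
    | 0 => decide
    | 1 => decide
    | n+2 => rw [lucas_add_two]; have := ih (n+1) (by omega); omega
lemma ltil_pos (n : ℕ) : 0 < ltil n := by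
  match n with
  | 0 => decide
  | 1 => decide
  | n+2 => rw [ltil_eq_lucas _ (by omega)]; exact lucas_pos _
lemma ltil_add_two (n : ℕ) (h : n ≠ 1) : ltil (n+2) = ltil (n+1) + ltil n := by
  match n with
  | 0 => decide
  | 1 => omega
  | 2 => decide
  | n+3 => rw [ltil_eq_lucas _ (by omega), ltil_eq_lucas _ (by omega), ltil_eq_lucas _ (by omega)]; rfl
lemma ltil_strictMono : StrictMono ltil := by
  have h : ∀ n, ltil n < ltil (n+1) := by
    intro n
    match n with
    | 0 => decide
    | 1 => decide
    | 2 => decide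
    | n+3 =>
      show ltil (n+3) < ltil (n+2+2)
      have h4 := ltil_add_two (n+2) (by omega)
      have := ltil_pos (n+2); have := ltil_pos (n+3)
      have h5 : ltil (n+2+1) = ltil (n+3) := rfl
      omega
  exact strictMono_nat_of_lt_succ h
lemma ltil_mono : Monotone ltil := ltil_strictMono.monotone
lemma self_le_ltil (n : ℕ) : n ≤ ltil n := ltil_strictMono.le_apply

lemma lucas_isLtil (n : ℕ) : ∃ j, lucas n = ltil j := by
  match n with
  | 0 => exact ⟨1, rfl⟩
  | 1 => exact ⟨0, rfl⟩
  | n+2 => exact ⟨n+2, (ltil_eq_lucas _ (by omega)).symm⟩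
lemma ltil_isLucas (j : ℕ) : ∃ n, ltil j = lucas n := by
  match j with
  | 0 => exact ⟨1, rfl⟩
  | 1 => exact ⟨0, rfl⟩
  | j+2 => exact ⟨j+2, ltil_eq_lucas _ (by omega)⟩

lemma glarge_spec (y : ℕ) (hy : 0 < y) : ltil (glarge y) ≤ y :=
  Nat.findGreatest_spec (P := fun k => ltil k ≤ y) (m := 0) (Nat.zero_le y) (show ltil 0 ≤ y from hy)
lemma le_glarge {k y : ℕ} (h : ltil k ≤ y) : k ≤ glarge y :=
  Nat.le_findGreatest ((self_le_ltil k).trans h) h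
lemma glarge_lt (y : ℕ) : y < ltil (glarge y + 1) := by
  by_contra h
  push_neg at h
  have := le_glarge h
  omega
lemma glarge_eq {k y : ℕ} (h1 : ltil k ≤ y) (h2 : y < ltil (k+1)) : glarge y = k := by
  have h3 := le_glarge h1
  have h4 := glarge_lt y
  by_contra hne
  have : k + 1 ≤ glarge y := by omega
  have := ltil_mono this
  have := glarge_spec y (lt_of_lt_of_le (ltil_pos k) h1)
  omega

lemma grAux_congr (f1 f2 y : ℕ) (h1 : y ≤ f1) (h2 : y ≤ f2) : grAux f1 y = grAux f2 y := by
  induction y using Nat.strong_induction_on generalizing f1 f2 with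
  | _ y ih =>
    match f1, f2 with
    | f1+1, f2+1 =>
      show (if y = 0 then 0 else _) = (if y = 0 then 0 else _)
      rcases Nat.eq_zero_or_pos y with rfl | hy
      · simp
      · have hl := glarge_spec y hy
        have hp := ltil_pos (glarge y)
        rw [if_neg (by omega), if_neg (by omega),
          ih (y - ltil (glarge y)) (by omega) f1 f2 (by omega) (by omega)]
    | 0, 0 => rfl
    | 0, f2+1 =>
      have hy0 : y = 0 := by omega
      subst hy0; rfl
    | f1+1, 0 =>
      have hy0 : y = 0 := by omega
      subst hy0; rfl

lemma gr_zero : gr 0 = 0 := rfl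
lemma gr_succ (y : ℕ) (hy : 0 < y) : gr y = 1 + gr (y - ltil (glarge y)) := by
  match y, hy with
  | y+1, _ =>
    show grAux (y+1) (y+1) = _
    have hl := glarge_spec (y+1) (by omega)
    have hp := ltil_pos (glarge (y+1))
    show (if y+1 = 0 then 0 else 1 + grAux y (y+1 - ltil (glarge (y+1)))) = _
    rw [if_neg (by omega)]
    congr 1
    exact grAux_congr _ _ _ (by omega) (by omega)

/-- the greedy step -/
lemma gr_step {k y : ℕ} (h1 : ltil k ≤ y) (h2 : y < ltil (k+1)) :
    gr y = 1 + gr (y - ltil k) := by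
  have := ltil_pos k
  rw [gr_succ y (by omega), glarge_eq h1 h2]

lemma gr_small : ∀ y < 11, ∀ u ≤ y, ∀ i < 5, y = u + ltil i → gr y ≤ gr u + 1 := by decide

/-- Key lemma: adding a single ltil part increases greedy count by at most 1. -/
lemma gr_add_one (u i : ℕ) : gr (u + ltil i) ≤ gr u + 1 := by
  set y := u + ltil i with hy0
  clear_value y
  induction y using Nat.strong_induction_on generalizing u i with
  | _ y ih =>
  subst hy0
  by_cases hsmall : u + ltil i < 11
  · exact gr_small _ hsmall u (by have := ltil_pos i; omega) i
      (by
        by_contra h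
        have h1 : ltil 5 ≤ ltil i := ltil_mono (by omega)
        have h2 : ltil 5 = 11 := rfl
        omega)
      rfl
  push_neg at hsmall
  set y := u + ltil i with hy0
  have hypos : 0 < y := by omega
  have hKy : ltil (glarge y) ≤ y := glarge_spec y hypos
  have hKy2 : y < ltil (glarge y + 1) := glarge_lt y
  have hK5 : 5 ≤ glarge y := le_glarge (by
    have h2 : ltil 5 = 11 := rfl
    show ltil 5 ≤ y
    omega)
  obtain ⟨m, hm⟩ : ∃ m, glarge y = m + 5 := ⟨glarge y - 5, by omega⟩
  rw [hm] at hKy hKy2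
  have hstepy0 := gr_succ y hypos
  rw [hm] at hstepy0
  -- recurrences
  have r1 : ltil (m+5) = ltil (m+4) + ltil (m+3) := ltil_add_two (m+3) (by omega)
  have r2 : ltil (m+4) = ltil (m+3) + ltil (m+2) := ltil_add_two (m+2) (by omega)
  have r3 : ltil (m+6) = ltil (m+5) + ltil (m+4) := ltil_add_two (m+4) (by omega)
  have hiK : i ≤ m + 5 := by
    by_contra h
    have : ltil (m+6) ≤ ltil i := ltil_mono (by omega)
    have : ltil i ≤ y := by omega
    have : y < ltil (m+5+1) := hKy2
    have : ltil (m+5+1) = ltil (m+6) := rfl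
    omega
  have hstepy : gr y = 1 + gr (y - ltil (m+5)) := hstepy0
  have hposi := ltil_pos i
  rcases eq_or_lt_of_le hiK with hieq | hilt
  · -- i = K
    subst hieq
    have : y - ltil (m+5) = u := by omega
    rw [hstepy, this]; omega
  have hiK1 : i ≤ m+4 := by omega
  have hli : ltil i ≤ ltil (m+4) := ltil_mono hiK1
  by_cases huK : ltil (m+5) ≤ u
  · -- u ≥ l K
    have hu2 : u < ltil (m+5+1) := by have : ltil (m+5+1) = ltil (m+6) := rfl; omega
    have hstepu : gr u = 1 + gr (u - ltil (m+5)) := gr_step huK hu2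
    have hdec : y - ltil (m+5) = (u - ltil (m+5)) + ltil i := by omega
    have := ih (y - ltil (m+5)) (by have := ltil_pos (m+5); omega) (u - ltil (m+5)) i hdec
    omega
  push_neg at huK
  have hulb : ltil (m+3) ≤ u := by omega
  by_cases huK1 : ltil (m+4) ≤ u
  · -- u = l(K-1) + u'
    set u' := u - ltil (m+4) with hu'
    have hu'lt : u' < ltil (m+3) := by omega
    have hstepu : gr u = 1 + gr u' := gr_step huK1 (by show u < ltil (m+4+1); have : ltil (m+4+1) = ltil (m+5) := rfl; omega)
    rcases Nat.lt_or_ge i (m+3) with hi3 | hi3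
    · -- i ≤ K-3 : w trick
      have hli3 : ltil i ≤ ltil (m+2) := ltil_mono (by omega)
      set w := u' + ltil i with hw
      have hwlb : ltil (m+3) ≤ w := by omega
      have r4 : ltil (m+3+1) = ltil (m+3) + ltil (m+2) := by
        have : ltil (m+3+1) = ltil (m+4) := rfl; omega
      have hwub : w < ltil (m+3+1) := by omega
      have hstepw : gr w = 1 + gr (w - ltil (m+3)) := gr_step hwlb hwub
      have hyw : y - ltil (m+5) = w - ltil (m+3) := by omega
      have hwy : w < y := by omega
      have := ih w hwy u' i rfl
      rw [hstepy, hyw]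
      omega
    rcases eq_or_lt_of_le hi3 with hieq3 | hi4
    · -- i = K-2
      have : ltil i = ltil (m+3) := by rw [hieq3]
      have hyu : y - ltil (m+5) = u' := by omega
      rw [hstepy, hyu]; omega
    · -- i = K-1
      have hieq4 : i = m + 4 := by omega
      have : ltil i = ltil (m+4) := by rw [hieq4]
      have r5 : ltil (m+4) - ltil (m+3) = ltil (m+2) := by omega
      have hyu : y - ltil (m+5) = u' + ltil (m+2) := by omega
      have := ih (u' + ltil (m+2)) (by have := ltil_pos (m+2); omega) u' (m+2) rfl
      rw [hstepy, hyu]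
      omega
  · -- u < l(K-1), forces i = K-1
    push_neg at huK1
    have hi4 : i = m + 4 := by
      by_contra h
      have : ltil i ≤ ltil (m+3) := ltil_mono (by omega)
      omega
    subst hi4
    have hstepu : gr u = 1 + gr (u - ltil (m+3)) := gr_step hulb (by show u < ltil (m+3+1); have : ltil (m+3+1) = ltil (m+4) := rfl; omega)
    have hyu : y - ltil (m+5) = u - ltil (m+3) := by omega
    rw [hstepy, hyu]
    omega

lemma gr_ltil (j : ℕ) : gr (ltil j) = 1 := by
  rw [gr_step le_rfl (ltil_strictMono (lt_add_one j)), Nat.sub_self, gr_zero]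

lemma gr_lucas (n : ℕ) : gr (lucas n) = 1 := by
  obtain ⟨j, hj⟩ := lucas_isLtil n; rw [hj, gr_ltil]

lemma gr_add_le (u v : ℕ) : gr (u + v) ≤ gr u + gr v := by
  induction v using Nat.strong_induction_on generalizing u with
  | _ v ih =>
    rcases Nat.eq_zero_or_pos v with rfl | hv
    · simp [gr_zero]
    · have hstep := gr_succ v hv
      have hl := glarge_spec v hv
      have hp := ltil_pos (glarge v)
      have h1 : u + v = (u + (v - ltil (glarge v))) + ltil (glarge v) := by omega
      calc gr (u + v) ≤ gr (u + (v - ltil (glarge v))) + 1 := by rw [h1]; exact gr_add_one _ _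
        _ ≤ gr u + gr (v - ltil (glarge v)) + 1 := by
            have := ih (v - ltil (glarge v)) (by omega) u; omega
        _ = gr u + gr v := by omega

lemma gr_le_self (y : ℕ) : gr y ≤ y := by
  induction y using Nat.strong_induction_on with
  | _ y ih =>
    rcases Nat.eq_zero_or_pos y with rfl | hv
    · simp [gr_zero]
    · have hstep := gr_succ y hv
      have hl := glarge_spec y hv
      have hp := ltil_pos (glarge y)
      have := ih (y - ltil (glarge y)) (by omega)
      omega

lemma gr_sub_small : ∀ b < 2, ∀ r < lucas (b+3), lucas (b+1) ≤ r →
    gr (r - lucas (b+1)) ≤ gr r := by decide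

/-- subtracting lucas (b+1) from r ∈ [lucas (b+1), lucas (b+3)) does not increase gr -/
lemma gr_sub (b r : ℕ) (h1 : lucas (b+1) ≤ r) (h2 : r < lucas (b+3)) :
    gr (r - lucas (b+1)) ≤ gr r := by
  rcases Nat.lt_or_ge b 2 with hb | hb
  · exact gr_sub_small b hb r h2 h1
  obtain ⟨c, rfl⟩ : ∃ c, b = c + 2 := ⟨b - 2, by omega⟩
  have e1 : ltil (c+3) = lucas (c+3) := ltil_eq_lucas _ (by omega)
  have e2 : ltil (c+4) = lucas (c+4) := ltil_eq_lucas _ (by omega)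
  have e3 : ltil (c+5) = lucas (c+5) := ltil_eq_lucas _ (by omega)
  have r1 : ltil (c+5) = ltil (c+4) + ltil (c+3) := ltil_add_two (c+3) (by omega)
  have r2 : ltil (c+4) = ltil (c+3) + ltil (c+2) := ltil_add_two (c+2) (by omega)
  have hA : lucas (c+2+1) = ltil (c+3) := e1.symm
  have hB : lucas (c+2+3) = ltil (c+5) := e3.symm
  have hC : lucas (c+4) = ltil (c+4) := e2.symm
  rcases Nat.lt_or_ge r (lucas (c+4)) with hr | hr
  · have hstep : gr r = 1 + gr (r - ltil (c+3)) :=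
      gr_step (by omega) (by show r < ltil (c+3+1); have : ltil (c+3+1) = ltil (c+4) := rfl; omega)
    rw [show lucas (c+2+1) = ltil (c+3) from e1.symm]
    omega
  · have hstep : gr r = 1 + gr (r - ltil (c+4)) :=
      gr_step (by omega) (by show r < ltil (c+4+1); have : ltil (c+4+1) = ltil (c+5) := rfl; omega)
    have hkey : r - lucas (c+2+1) = (r - ltil (c+4)) + ltil (c+2) := by
      have : ltil (c+2+2) = ltil (c+2+1) + ltil (c+2) := ltil_add_two (c+2) (by omega)
      have h4 : ltil (c+2+2) = ltil (c+4) := rfl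
      have h5 : ltil (c+2+1) = ltil (c+3) := rfl
      omega
    rw [hkey]
    have := gr_add_one (r - ltil (c+4)) (c+2)
    omega

lemma modcase (L c w x : ℕ) (hL : 0 < L) (hx : x = c*L + w) (hw : w < L) :
    x % L = w ∧ x / L = c := by
  subst hx
  constructor
  · rw [Nat.mul_comm, Nat.mul_add_mod]; exact Nat.mod_eq_of_lt hw
  · rw [Nat.mul_comm, Nat.mul_add_div hL, Nat.div_eq_of_lt hw]; omega

lemma gr_add_lucas (u n : ℕ) : gr (u + lucas n) ≤ gr u + 1 := by
  obtain ⟨j, hj⟩ := lucas_isLtil n; rw [hj]; exact gr_add_one u j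

lemma shiftc (L c x : ℕ) (hL : 0 < L) : (c*L + x) % L = x % L ∧ (c*L + x)/L = c + x/L := by
  constructor
  · rw [Nat.add_comm, Nat.add_mul_mod_self_right]
  · rw [Nat.mul_comm, Nat.mul_add_div hL]

lemma shiftc' (L c x : ℕ) (hL : 0 < L) : (L*c + x) % L = x % L ∧ (L*c + x)/L = c + x/L := by
  rw [Nat.mul_comm]; exact shiftc L c x hL

lemma claimBp (b : ℕ) : ∀ n, b+5 ≤ n → ∀ r < lucas (b+3),
    gr ((r + lucas n) % lucas (b+3)) ≤ gr r + (r + lucas n) / lucas (b+3) := by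
  intro n
  induction n using Nat.strong_induction_on with
  | _ n ih =>
  intro hn r hr
  set L := lucas (b+3) with hLdef
  have hL : 0 < L := lucas_pos _
  have q1 : lucas (b+4) = lucas (b+3) + lucas (b+2) := lucas_add_two (b+2)
  have q2 : lucas (b+3) = lucas (b+2) + lucas (b+1) := lucas_add_two (b+1)
  have q3 : lucas (b+2) = lucas (b+1) + lucas b := lucas_add_two b
  have q4 : lucas (b+5) = lucas (b+4) + lucas (b+3) := lucas_add_two (b+3)
  have q5 : lucas (b+6) = lucas (b+5) + lucas (b+4) := lucas_add_two (b+4)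
  rcases Nat.lt_or_ge n (b+7) with hn7 | hn7
  · rcases Nat.lt_or_ge n (b+6) with hn6 | hn6
    · -- n = b+5
      have hne : n = b+5 := by omega
      subst hne
      set w := r + lucas (b+2) with hw
      have hx : r + lucas (b+5) = 2*L + w := by omega
      rcases Nat.lt_or_ge w L with hwL | hwL
      · obtain ⟨hm, hd⟩ := modcase L 2 w _ hL hx hwL
        rw [hm, hd, hw]
        have := gr_add_lucas r (b+2)
        omega
      · have hwlt : w - L < L := by omega
        have hx2 : r + lucas (b+5) = 3*L + (w - L) := by omega
        obtain ⟨hm, hd⟩ := modcase L 3 (w-L) _ hL hx2 hwlt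
        rw [hm, hd, show w - L = r - lucas (b+1) from by omega]
        have hsub : gr (r - lucas (b+1)) ≤ gr r := gr_sub b r (by omega) (by omega)
        omega
    · -- n = b+6
      have hne : n = b+6 := by omega
      subst hne
      set w := r + 2*lucas (b+2) with hw
      have hx : r + lucas (b+6) = 3*L + w := by omega
      rcases Nat.lt_or_ge w L with hwL | hwL
      · obtain ⟨hm, hd⟩ := modcase L 3 w _ hL hx hwL
        rw [hm, hd, show w = r + lucas (b+2) + lucas (b+2) from by omega]
        have h1 := gr_add_lucas r (b+2)
        have h2 := gr_add_lucas (r + lucas (b+2)) (b+2)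
        omega
      rcases Nat.lt_or_ge w (2*L) with hw2 | hw2
      · have hx2 : r + lucas (b+6) = 4*L + (w - L) := by omega
        obtain ⟨hm, hd⟩ := modcase L 4 (w-L) _ hL hx2 (by omega)
        rw [hm, hd, show w - L = r + lucas b from by omega]
        have := gr_add_lucas r b
        omega
      · have hw3 : w < 3*L := by omega
        have hx2 : r + lucas (b+6) = 5*L + (w - 2*L) := by omega
        obtain ⟨hm, hd⟩ := modcase L 5 (w - 2*L) _ hL hx2 (by omega)
        rw [hm, hd, show w - 2*L = r - lucas (b+1) - lucas (b+1) from by omega]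
        have hs1 : gr (r - lucas (b+1)) ≤ gr r := gr_sub b r (by omega) (by omega)
        have hs2 : gr (r - lucas (b+1) - lucas (b+1)) ≤ gr (r - lucas (b+1)) :=
          gr_sub b (r - lucas (b+1)) (by omega) (by omega)
        omega
  · -- step
    obtain ⟨d, rfl⟩ : ∃ d, n = d + (b+7) := ⟨n - (b+7), by omega⟩
    have hrec : lucas (d+b+7) = lucas (d+b+6) + lucas (d+b+5) := lucas_add_two (d+b+5)
    have hidx : d + (b+7) = d+b+7 := by omega
    rw [hidx]
    have hx := Nat.div_add_mod (r + lucas (d+b+5)) L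
    have hmlt : (r + lucas (d+b+5)) % L < L := Nat.mod_lt _ hL
    have IH1 := ih (d+b+5) (by omega) (by omega) r hr
    have IH2 := ih (d+b+6) (by omega) (by omega) ((r + lucas (d+b+5)) % L) hmlt
    have hkey : r + lucas (d+b+7)
        = L*((r + lucas (d+b+5))/L) + ((r + lucas (d+b+5)) % L + lucas (d+b+6)) := by omega
    obtain ⟨hm, hd⟩ := shiftc' L ((r + lucas (d+b+5))/L) ((r + lucas (d+b+5)) % L + lucas (d+b+6)) hL
    rw [hkey, hm, hd]
    omega

lemma claimB (b : ℕ) : ∀ n, b+3 ≤ n → ∀ r < lucas (b+3),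
    gr ((r + lucas n) % lucas (b+3)) ≤ gr r + 1 + (r + lucas n) / lucas (b+3) := by
  intro n hn r hr
  set L := lucas (b+3) with hLdef
  have hL : 0 < L := lucas_pos _
  have q1 : lucas (b+4) = lucas (b+3) + lucas (b+2) := lucas_add_two (b+2)
  have q2 : lucas (b+3) = lucas (b+2) + lucas (b+1) := lucas_add_two (b+1)
  rcases Nat.lt_or_ge n (b+4) with hn4 | hn4
  · have : n = b+3 := by omega
    subst this
    obtain ⟨hm, hd⟩ := modcase L 1 r (r + lucas (b+3)) hL (by omega) hr
    rw [hm, hd]; omega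
  rcases Nat.lt_or_ge n (b+5) with hn5 | hn5
  · have : n = b+4 := by omega
    subst this
    set w := r + lucas (b+2) with hw
    rcases Nat.lt_or_ge w L with hwL | hwL
    · obtain ⟨hm, hd⟩ := modcase L 1 w (r + lucas (b+4)) hL (by omega) hwL
      rw [hm, hd, hw]
      have := gr_add_lucas r (b+2)
      omega
    · obtain ⟨hm, hd⟩ := modcase L 2 (w - L) (r + lucas (b+4)) hL (by omega) (by omega)
      rw [hm, hd, show w - L = r - lucas (b+1) from by omega]
      have hs : gr (r - lucas (b+1)) ≤ gr r := gr_sub b r (by omega) (by omega)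
      omega
  · have := claimBp b n hn5 r hr
    rw [← hLdef] at this
    omega

lemma claimA (b : ℕ) : ∀ y, gr (y % lucas (b+3)) ≤ gr y + y / lucas (b+3) := by
  intro y
  induction y using Nat.strong_induction_on with
  | _ y ih =>
  set L := lucas (b+3) with hLdef
  have hL : 0 < L := lucas_pos _
  rcases Nat.lt_or_ge y L with hy | hy
  · rw [Nat.mod_eq_of_lt hy, Nat.div_eq_of_lt hy]; omega
  · have hypos : 0 < y := by omega
    have hstep := gr_succ y hypos
    have hlk := glarge_spec y hypos
    have hgl : b+3 ≤ glarge y := le_glarge (by rw [ltil_eq_lucas _ (by omega)]; exact hy)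
    have hlt : ltil (glarge y) = lucas (glarge y) := ltil_eq_lucas _ (by omega)
    have hp := ltil_pos (glarge y)
    have hx := Nat.div_add_mod (y - ltil (glarge y)) L
    have hmlt : (y - ltil (glarge y)) % L < L := Nat.mod_lt _ hL
    have hkey : y = L*((y - ltil (glarge y))/L)
        + ((y - ltil (glarge y)) % L + lucas (glarge y)) := by omega
    obtain ⟨hm, hd⟩ := shiftc' L ((y - ltil (glarge y))/L)
      ((y - ltil (glarge y)) % L + lucas (glarge y)) hL
    have hm2 : y % L = ((y - ltil (glarge y)) % L + lucas (glarge y)) % L := by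
      conv_lhs => rw [hkey]
      rw [hm]
    have hd2 : y / L = (y - ltil (glarge y))/L + ((y - ltil (glarge y)) % L + lucas (glarge y)) / L := by
      conv_lhs => rw [hkey]
      rw [hd]
    have hB := claimB b (glarge y) hgl ((y - ltil (glarge y)) % L) hmlt
    rw [← hLdef] at hB
    have IH := ih (y - ltil (glarge y)) (by omega)
    rw [hm2, hd2]
    omega

lemma R_sub (a : ℕ) : ∀ y m, gr y ≤ m → m * lucas a + y ∈ Sset a := by
  intro y
  induction y using Nat.strong_induction_on with
  | _ y ih =>
  intro m hm
  rcases Nat.eq_zero_or_pos y with rfl | hy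
  · rw [Nat.add_zero]
    have h2 : m • lucas a = m * lucas a := by simp
    rw [← h2]
    have hgen0 : lucas a ∈ ({lucas a} ∪ {x : ℕ | ∃ n : ℕ, x = lucas a + lucas n} : Set ℕ) := by
      left; rfl
    exact nsmul_mem (AddSubmonoid.subset_closure hgen0) m
  · have hstep := gr_succ y hy
    have hl := glarge_spec y hy
    have hp := ltil_pos (glarge y)
    have hm1 : 1 ≤ m := by omega
    obtain ⟨n, hn⟩ := ltil_isLucas (glarge y)
    have hIH := ih (y - ltil (glarge y)) (by omega) (m-1) (by omega)
    have hgen1 : lucas a + lucas n ∈ ({lucas a} ∪ {x : ℕ | ∃ n : ℕ, x = lucas a + lucas n} : Set ℕ) := by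
      right; exact ⟨n, rfl⟩
    have hgen : lucas a + lucas n ∈ Sset a := AddSubmonoid.subset_closure hgen1
    have key : m * lucas a + y = ((m-1) * lucas a + (y - ltil (glarge y))) + (lucas a + lucas n) := by
      have : (m-1) * lucas a + lucas a = m * lucas a := by
        cases m with
        | zero => omega
        | succ k => simp [Nat.succ_sub_one, Nat.succ_mul]
      omega
    rw [key]
    exact AddSubmonoid.add_mem _ hIH hgen

lemma Sset_sub (a x : ℕ) (hx : x ∈ Sset a) : ∃ m y, x = m * lucas a + y ∧ gr y ≤ m := by
  induction hx using AddSubmonoid.closure_induction with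
  | mem z hz =>
    rcases hz with hz | ⟨n, hn⟩
    · exact ⟨1, 0, by simp [Set.mem_singleton_iff.mp hz], by simp [gr_zero]⟩
    · exact ⟨1, lucas n, by simp [hn], by rw [gr_lucas]⟩
  | zero => exact ⟨0, 0, by simp, by simp [gr_zero]⟩
  | add x y hx hy ihx ihy =>
    obtain ⟨m1, y1, rfl, h1⟩ := ihx
    obtain ⟨m2, y2, rfl, h2⟩ := ihy
    refine ⟨m1 + m2, y1 + y2, ?_, ?_⟩
    · rw [Nat.add_mul]; omega
    · exact le_trans (gr_add_le y1 y2) (by omega)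

lemma mem_Sset_iff (a x : ℕ) (ha : 3 ≤ a) :
    x ∈ Sset a ↔ gr (x % lucas a) ≤ x / lucas a := by
  obtain ⟨b, rfl⟩ : ∃ b, a = b + 3 := ⟨a - 3, by omega⟩
  have hL : 0 < lucas (b+3) := lucas_pos _
  constructor
  · intro hx
    obtain ⟨m, y, rfl, hgr⟩ := Sset_sub _ _ hx
    obtain ⟨hm, hd⟩ := shiftc (lucas (b+3)) m y hL
    rw [hm, hd]
    have := claimA b y
    omega
  · intro h
    have hx := Nat.div_add_mod x (lucas (b+3))
    have := R_sub (b+3) (x % lucas (b+3)) (x / lucas (b+3)) h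
    rw [show x / lucas (b+3) * lucas (b+3) + x % lucas (b+3) = x by
      rw [Nat.mul_comm]; exact hx] at this
    exact this

def genusN (a : ℕ) : ℕ := ∑ r ∈ Finset.range (lucas a), gr r

lemma gap_card (a : ℕ) (ha : 3 ≤ a) : {x : ℕ | x ∉ Sset a}.ncard = genusN a := by
  set L := lucas a with hLdef
  have hL : 0 < L := lucas_pos _
  have hchar : ∀ x, x ∉ Sset a ↔ x / L < gr (x % L) := by
    intro x
    rw [mem_Sset_iff a x ha, ← hLdef]
    omega
  have hset : {x : ℕ | x ∉ Sset a} =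
      ↑((Finset.range (L * L)).filter fun x => x / L < gr (x % L)) := by
    ext x
    simp only [Set.mem_setOf_eq, Finset.coe_filter, Finset.mem_range, hchar]
    constructor
    · intro h
      refine ⟨?_, h⟩
      have h1 : gr (x % L) ≤ x % L := gr_le_self _
      have h2 : x % L < L := Nat.mod_lt _ hL
      have h3 : x / L < L := by omega
      exact (Nat.div_lt_iff_lt_mul hL).mp h3
    · exact fun h => h.2
  rw [hset, Set.ncard_coe_finset]
  have hbij : (Finset.range (L * L)).filter (fun x => x / L < gr (x % L)) =
      (Finset.range L).biUnion (fun r => (Finset.range (gr r)).image (fun q => q * L + r)) := by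
    ext x
    simp only [Finset.mem_filter, Finset.mem_range, Finset.mem_biUnion, Finset.mem_image]
    constructor
    · rintro ⟨hlt, hgr⟩
      refine ⟨x % L, Nat.mod_lt _ hL, x / L, hgr, ?_⟩
      rw [Nat.mul_comm]
      exact Nat.div_add_mod x L
    · rintro ⟨r, hr, q, hq, rfl⟩
      obtain ⟨hm, hd⟩ := modcase L q r _ hL rfl hr
      have hgrr : gr r ≤ r := gr_le_self r
      have hq1 : q + 1 ≤ L := by omega
      have h2 : (q+1) * L ≤ L * L := Nat.mul_le_mul_right L hq1
      have h3 : (q+1) * L = q * L + L := by rw [Nat.succ_mul]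
      refine ⟨by omega, ?_⟩
      rw [hm, hd]
      exact hq
  rw [hbij, Finset.card_biUnion]
  · unfold genusN
    rw [← hLdef]
    apply Finset.sum_congr rfl
    intro r hr
    rw [Finset.card_image_of_injective _ (fun q1 q2 h => by
      have e1 := (modcase L q1 r _ hL rfl (Finset.mem_range.mp hr)).2
      have e2 := (modcase L q2 r _ hL rfl (Finset.mem_range.mp hr)).2
      rw [h] at e1
      omega), Finset.card_range]
  · intro r1 h1 r2 h2 hne
    simp only [Finset.disjoint_left, Finset.mem_image, Finset.mem_range]
    rintro x ⟨q1, hq1, rfl⟩ ⟨q2, hq2, heq⟩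
    have e1 := (modcase L q1 r1 _ hL rfl (Finset.mem_range.mp h1)).1
    have e2 := (modcase L q2 r2 _ hL rfl (Finset.mem_range.mp h2)).1
    rw [heq] at e2
    exact hne (by omega)

lemma genusN_rec (a : ℕ) (ha : 1 ≤ a) : genusN (a+2) = genusN (a+1) + genusN a + lucas a := by
  unfold genusN
  rw [show lucas (a+2) = lucas (a+1) + lucas a from lucas_add_two a, Finset.sum_range_add]
  have hstep : ∀ i ∈ Finset.range (lucas a), gr (lucas (a+1) + i) = 1 + gr i := by
    intro i hi
    have hi' : i < lucas a := Finset.mem_range.mp hi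
    have e1 : ltil (a+1) = lucas (a+1) := ltil_eq_lucas _ (by omega)
    have e2 : ltil (a+2) = lucas (a+2) := ltil_eq_lucas _ (by omega)
    have hrec : lucas (a+2) = lucas (a+1) + lucas a := lucas_add_two a
    have h1 : ltil (a+1) ≤ lucas (a+1) + i := by omega
    have h2 : lucas (a+1) + i < ltil (a+1+1) := by
      have : ltil (a+1+1) = ltil (a+2) := rfl
      omega
    have := gr_step h1 h2
    rw [this, e1, show lucas (a+1) + i - lucas (a+1) = i from by omega]
  rw [Finset.sum_congr rfl hstep, Finset.sum_add_distrib, Finset.sum_const, Finset.card_range]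
  simp only [smul_eq_mul]
  omega

def Af (m : ℕ) : ℕ := ∑ i ∈ Finset.range (m+1), i * Nat.choose (m-i) i
def Df (m : ℕ) : ℕ := ∑ i ∈ Finset.range (m+1), (i+2) * Nat.choose (m-i) i
def Ff (m : ℕ) : ℕ := ∑ i ∈ Finset.range (m+1), Nat.choose (m-i) i

lemma choose_step (m i : ℕ) (h : i ≤ m) :
    Nat.choose (m+1-i) (i+1) = Nat.choose (m-i) i + Nat.choose (m-i) (i+1) := by
  rw [show m+1-i = (m-i)+1 from by omega]
  exact Nat.choose_succ_succ (m-i) i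

lemma Wrec (g : ℕ → ℕ) (m : ℕ) :
    ∑ i ∈ Finset.range (m+3), g i * Nat.choose (m+2-i) i
    = (∑ i ∈ Finset.range (m+2), g i * Nat.choose (m+1-i) i)
      + ∑ i ∈ Finset.range (m+1), g (i+1) * Nat.choose (m-i) i := by
  have hL : ∑ i ∈ Finset.range (m+3), g i * Nat.choose (m+2-i) i
      = (∑ i ∈ Finset.range (m+2), g (i+1) * Nat.choose (m+1-i) (i+1)) + g 0 := by
    rw [Finset.sum_range_succ']
    congr 1
    · apply Finset.sum_congr rfl
      intro i _
      congr 2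
      omega
    · simp
  have hR : ∑ i ∈ Finset.range (m+2), g i * Nat.choose (m+1-i) i
      = (∑ i ∈ Finset.range (m+1), g (i+1) * Nat.choose (m-i) (i+1)) + g 0 := by
    rw [Finset.sum_range_succ']
    congr 1
    · apply Finset.sum_congr rfl
      intro i _
      congr 2
      omega
    · simp
  have hsplit : ∑ i ∈ Finset.range (m+2), g (i+1) * Nat.choose (m+1-i) (i+1)
      = (∑ i ∈ Finset.range (m+1), g (i+1) * Nat.choose (m-i) i)
        + ∑ i ∈ Finset.range (m+1), g (i+1) * Nat.choose (m-i) (i+1) := by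
    rw [Finset.sum_range_succ, Nat.sub_self, Nat.choose_eq_zero_of_lt (by omega), Nat.mul_zero,
      Nat.add_zero, ← Finset.sum_add_distrib]
    apply Finset.sum_congr rfl
    intro i hi
    rw [choose_step m i (by have := Finset.mem_range.mp hi; omega), Nat.mul_add]
  omega

lemma Af_rec (m : ℕ) : Af (m+2) = Af (m+1) + Af m + Ff m := by
  have h := Wrec (fun i => i) m
  unfold Af Ff
  rw [show m+2+1 = m+3 from rfl, h, show m+1+1 = m+2 from rfl]
  have : ∑ i ∈ Finset.range (m+1), (i+1) * Nat.choose (m-i) i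
      = (∑ i ∈ Finset.range (m+1), i * Nat.choose (m-i) i)
        + ∑ i ∈ Finset.range (m+1), Nat.choose (m-i) i := by
    rw [← Finset.sum_add_distrib]
    apply Finset.sum_congr rfl
    intro i _
    rw [Nat.add_mul, Nat.one_mul]
  omega

lemma Df_rec (m : ℕ) : Df (m+2) = Df (m+1) + Df m + Ff m := by
  have h := Wrec (fun i => i+2) m
  unfold Df Ff
  rw [show m+2+1 = m+3 from rfl, h, show m+1+1 = m+2 from rfl]
  have : ∑ i ∈ Finset.range (m+1), (i+1+2) * Nat.choose (m-i) i
      = (∑ i ∈ Finset.range (m+1), (i+2) * Nat.choose (m-i) i)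
        + ∑ i ∈ Finset.range (m+1), Nat.choose (m-i) i := by
    rw [← Finset.sum_add_distrib]
    apply Finset.sum_congr rfl
    intro i _
    have : i+1+2 = (i+2)+1 := by omega
    rw [this, Nat.add_mul, Nat.one_mul]
  omega

lemma Ff_rec (m : ℕ) : Ff (m+2) = Ff (m+1) + Ff m := by
  have h := Wrec (fun _ => 1) m
  simp only [Nat.one_mul] at h
  unfold Ff
  rw [show m+2+1 = m+3 from rfl, h]

lemma lucas_Ff : ∀ b, lucas (b+3) + Ff b = Ff (b+4) := by
  intro b
  induction b using Nat.strong_induction_on with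
  | _ b ih =>
  match b with
  | 0 => decide
  | 1 => decide
  | b+2 =>
    have IH0 : lucas (b+3) + Ff b = Ff (b+4) := ih b (by omega)
    have IH1 : lucas (b+4) + Ff (b+1) = Ff (b+5) := ih (b+1) (by omega)
    have h1 : Ff (b+2) = Ff (b+1) + Ff b := Ff_rec b
    have h2 : Ff (b+6) = Ff (b+5) + Ff (b+4) := Ff_rec (b+4)
    have h3 : lucas (b+5) = lucas (b+4) + lucas (b+3) := lucas_add_two (b+3)
    show lucas (b+5) + Ff (b+2) = Ff (b+6)
    omega

lemma main_id : ∀ b, genusN (b+3) + Df b = Af (b+4) := by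
  intro b
  induction b using Nat.strong_induction_on with
  | _ b ih =>
  match b with
  | 0 => decide
  | 1 => decide
  | b+2 =>
    have IH0 : genusN (b+3) + Df b = Af (b+4) := ih b (by omega)
    have IH1 : genusN (b+4) + Df (b+1) = Af (b+5) := ih (b+1) (by omega)
    have h1 : genusN (b+5) = genusN (b+4) + genusN (b+3) + lucas (b+3) := genusN_rec (b+3) (by omega)
    have h2 : Df (b+2) = Df (b+1) + Df b + Ff b := Df_rec b
    have h3 : Af (b+6) = Af (b+5) + Af (b+4) + Ff (b+4) := Af_rec (b+4)
    have h4 : lucas (b+3) + Ff b = Ff (b+4) := lucas_Ff b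
    show genusN (b+5) + Df (b+2) = Af (b+6)
    omega

lemma IccA (m : ℕ) : ∑ i ∈ Finset.Icc 1 (m/2), (i:ℤ) * (Nat.choose (m-i) i : ℤ) = (Af m : ℤ) := by
  have hsub : Finset.Icc 1 (m/2) ⊆ Finset.range (m+1) := by
    intro x hx
    simp only [Finset.mem_Icc] at hx
    simp only [Finset.mem_range]
    omega
  rw [Finset.sum_subset hsub ?_]
  · unfold Af
    push_cast
    rfl
  · intro x _ hnx
    simp only [Finset.mem_Icc, not_and, not_le] at hnx
    rcases Nat.eq_zero_or_pos x with rfl | hxpos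
    · simp
    · have hx2 : m/2 < x := hnx hxpos
      have hlt : m - x < x := by omega
      rw [Nat.choose_eq_zero_of_lt hlt]
      simp

lemma IccD (m : ℕ) : ∑ i ∈ Finset.Icc 0 (m/2), ((i:ℤ)+2) * (Nat.choose (m-i) i : ℤ) = (Df m : ℤ) := by
  have hsub : Finset.Icc 0 (m/2) ⊆ Finset.range (m+1) := by
    intro x hx
    simp only [Finset.mem_Icc] at hx
    simp only [Finset.mem_range]
    omega
  rw [Finset.sum_subset hsub ?_]
  · unfold Df
    push_cast
    rfl
  · intro x _ hnx
    simp only [Finset.mem_Icc, not_and, not_le] at hnx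
    have hx2 : m/2 < x := hnx (Nat.zero_le x)
    have hlt : m - x < x := by omega
    rw [Nat.choose_eq_zero_of_lt hlt]
    simp

theorem genus_S_binomial (a : ℕ) (ha : 3 ≤ a) :
    ({x : ℕ | x ∉ Sset a}.ncard : ℤ) =
      (∑ i ∈ Finset.Icc 1 ((a + 1) / 2), (i : ℤ) * (Nat.choose (a + 1 - i) i : ℤ)) -
      (∑ i ∈ Finset.Icc 0 ((a - 3) / 2), ((i : ℤ) + 2) * (Nat.choose (a - 3 - i) i : ℤ)) := by
  obtain ⟨b, rfl⟩ : ∃ b, a = b + 3 := ⟨a - 3, by omega⟩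
  rw [gap_card (b+3) (by omega)]
  have hA := IccA (b+4)
  have hD := IccD b
  have hm := main_id b
  simp only [show b+3+1 = b+4 from rfl, show b+3-3 = b from by omega]
  rw [hA, hD]
  omega
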